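/- Let n be a natural number and let ℓ > 1 be an odd natural number. The set of conjugacy class sums Y_ℓ(n) = {s_i : 1 ≤ i ≤ n, and if i is even then ℓ does not divide i} ∪ {s_{(2ℓj−1,2)} : j ≥ 1, 1 < 2ℓj < n} generates the center Z(ℚ[S_n]) of the group algebra ℚ[S_n] as a ℚ-algebra. -/

import Mathlib

set_option linter.unusedSectionVars false
set_option maxHeartbeats 2000000

/-! ### A linear-algebraic "reflection length" for permutations -/

section RankLemmas

open Equiv Equiv.Perm Module Submodule LinearMap

variable {α : Type*} [Fintype α] [DecidableEq α]

/-- The linear endomorphism `1 - (v ↦ v ∘ σ)` of `α → ℚ`. -/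
noncomputable def permL (σ : Equiv.Perm α) : (α → ℚ) →ₗ[ℚ] (α → ℚ) :=
  LinearMap.id - LinearMap.funLeft ℚ ℚ σ

/-- The "reflection length" of a permutation, as the rank of `1 - σ`. -/
noncomputable def rk (σ : Equiv.Perm α) : ℕ :=
  Module.finrank ℚ (LinearMap.range (permL σ))

lemma mem_ker_permL {σ : Equiv.Perm α} {v : α → ℚ} :
    v ∈ LinearMap.ker (permL σ) ↔ ∀ x, v (σ x) = v x := by
  constructor
  · intro h x
    have := congrFun (LinearMap.mem_ker.mp h) x
    simp [permL, LinearMap.funLeft] at this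
    linarith [this]
  · intro h
    ext x
    simp [permL, LinearMap.funLeft, h x]

lemma rk_mul_le (a b : Equiv.Perm α) : rk (a * b) ≤ rk a + rk b := by
  have hcomp : LinearMap.funLeft ℚ ℚ ⇑(a * b) =
      (LinearMap.funLeft ℚ ℚ ⇑b).comp (LinearMap.funLeft ℚ ℚ ⇑a) := by
    ext v x
    simp [LinearMap.funLeft]
  have key : permL (a * b) =
      (permL b).comp (LinearMap.funLeft ℚ ℚ ⇑a) + permL a := by
    ext v x
    simp [permL, hcomp, LinearMap.funLeft, LinearMap.sub_apply]
  have hsub : LinearMap.range (permL (a * b)) ≤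
      LinearMap.range ((permL b).comp (LinearMap.funLeft ℚ ℚ ⇑a)) ⊔
        LinearMap.range (permL a) := by
    rintro x ⟨v, rfl⟩
    rw [key]
    exact Submodule.add_mem_sup ⟨v, rfl⟩ ⟨v, rfl⟩
  have hr : LinearMap.range ((permL b).comp (LinearMap.funLeft ℚ ℚ ⇑a)) =
      LinearMap.range (permL b) := by
    apply LinearMap.range_comp_of_range_eq_top
    exact LinearMap.range_eq_top.mpr (LinearEquiv.funCongrLeft ℚ ℚ a).surjective
  refine le_trans (Submodule.finrank_mono hsub) ?_
  refine le_trans (Submodule.finrank_add_le_finrank_add_finrank _ _) ?_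
  rw [hr]
  simp only [rk]
  omega

lemma rk_add_nullity (σ : Equiv.Perm α) :
    rk σ + Module.finrank ℚ (LinearMap.ker (permL σ)) = Fintype.card α := by
  rw [rk, LinearMap.finrank_range_add_finrank_ker, Module.finrank_pi]

lemma rk_one : rk (1 : Equiv.Perm α) = 0 := by
  have : permL (1 : Equiv.Perm α) = 0 := by
    ext v x
    simp [permL, LinearMap.funLeft]
  rw [rk, this, LinearMap.range_zero, finrank_bot]

lemma nullity_isCycle {c : Equiv.Perm α} (hc : c.IsCycle) :
    Module.finrank ℚ (LinearMap.ker (permL c)) + c.support.card = Fintype.card α + 1 := by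
  obtain ⟨x₀, hx₀, _⟩ := id hc
  have hconst : ∀ v ∈ LinearMap.ker (permL c), ∀ y ∈ c.support, v y = v x₀ := by
    intro v hv y hy
    have hpow : ∀ (k : ℕ) (x : α), v ((c ^ k) x) = v x := by
      intro k
      induction k with
      | zero => simp
      | succ k ih =>
        intro x
        rw [pow_succ, Equiv.Perm.mul_apply, ih, mem_ker_permL.mp hv]
    obtain ⟨i, hi⟩ := hc.exists_pow_eq hx₀ (Equiv.Perm.mem_support.mp hy)
    rw [← hi, hpow]
  classical
  have e : (LinearMap.ker (permL c)) ≃ₗ[ℚ] ℚ × ({x : α // x ∉ c.support} → ℚ) :=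
    { toFun := fun v => (v.1 x₀, fun y => v.1 y.1)
      map_add' := fun v w => rfl
      map_smul' := fun r v => rfl
      invFun := fun p =>
        ⟨fun a => if h : a ∈ c.support then p.1 else p.2 ⟨a, h⟩, by
          rw [mem_ker_permL]
          intro x
          by_cases hx : x ∈ c.support
          · rw [dif_pos hx, dif_pos (Equiv.Perm.apply_mem_support.mpr hx)]
          · rw [Equiv.Perm.notMem_support.mp hx]⟩
      left_inv := by
        rintro ⟨v, hv⟩
        ext a
        by_cases ha : a ∈ c.support
        · simp only [dif_pos ha]
          exact (hconst v hv a ha).symm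
        · simp only [dif_neg ha]
      right_inv := by
        rintro ⟨q, w⟩
        refine Prod.ext ?_ ?_
        · simp only
          rw [dif_pos (Equiv.Perm.mem_support.mpr hx₀)]
        · ext y
          simp only
          rw [dif_neg y.2] }
  rw [e.finrank_eq]
  rw [Module.finrank_prod, Module.finrank_self, Module.finrank_pi]
  have : Fintype.card {x : α // x ∉ c.support} = Fintype.card α - c.support.card := by
    rw [Fintype.card_subtype_compl, Fintype.card_coe]
  rw [this]
  have := c.support.card_le_univ
  have h1 : 1 ≤ c.support.card := le_trans (by norm_num) (Equiv.Perm.IsCycle.two_le_card_support hc)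
  omega

lemma rk_isCycle {c : Equiv.Perm α} (hc : c.IsCycle) : rk c + 1 = c.support.card := by
  have h1 := rk_add_nullity c
  have h2 := nullity_isCycle hc
  have := c.support.card_le_univ
  omega

lemma ker_permL_mul {σ τ : Equiv.Perm α} (h : Equiv.Perm.Disjoint σ τ) :
    LinearMap.ker (permL (σ * τ)) = LinearMap.ker (permL σ) ⊓ LinearMap.ker (permL τ) := by
  apply le_antisymm
  · intro v hv
    rw [Submodule.mem_inf, mem_ker_permL, mem_ker_permL]
    rw [mem_ker_permL] at hv
    constructor
    · intro x
      by_cases hx : σ x = x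
      · rw [hx]
      · have hτ : τ x = x := (h x).resolve_left hx
        have : (σ * τ) x = σ x := by rw [Equiv.Perm.mul_apply, hτ]
        rw [← this, hv]
    · intro x
      by_cases hx : τ x = x
      · rw [hx]
      · have hτx : τ (τ x) ≠ τ x := fun h' => hx (τ.injective h')
        have hστx : σ (τ x) = τ x := (h (τ x)).resolve_right hτx
        have : (σ * τ) x = τ x := by rw [Equiv.Perm.mul_apply, hστx]
        rw [← this, hv]
  · intro v hv
    rw [Submodule.mem_inf, mem_ker_permL, mem_ker_permL] at hv
    rw [mem_ker_permL]
    intro x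
    rw [Equiv.Perm.mul_apply, hv.1, hv.2]

lemma ker_permL_sup {σ τ : Equiv.Perm α} (h : Equiv.Perm.Disjoint σ τ) :
    LinearMap.ker (permL σ) ⊔ LinearMap.ker (permL τ) = ⊤ := by
  rw [eq_top_iff]
  intro v _
  classical
  set v₁ : α → ℚ := fun x => if x ∈ σ.support then v x else 0 with hv₁
  have h₁ : v₁ ∈ LinearMap.ker (permL τ) := by
    rw [mem_ker_permL]
    intro x
    by_cases hx : τ x = x
    · rw [hx]
    · have hx1 : x ∉ σ.support := by
        rw [Equiv.Perm.mem_support, not_not]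
        by_contra h'
        exact hx ((h x).resolve_left h')
      have hx2 : τ x ∉ σ.support := by
        rw [Equiv.Perm.mem_support, not_not]
        have hτx : τ (τ x) ≠ τ x := fun h' => hx (τ.injective h')
        exact (h (τ x)).resolve_right hτx
      simp only [hv₁, if_neg hx1, if_neg hx2]
  have h₂ : v - v₁ ∈ LinearMap.ker (permL σ) := by
    rw [mem_ker_permL]
    intro x
    by_cases hx : σ x = x
    · rw [hx]
    · have hx1 : x ∈ σ.support := Equiv.Perm.mem_support.mpr hx
      have hx2 : σ x ∈ σ.support := Equiv.Perm.apply_mem_support.mpr hx1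
      simp only [Pi.sub_apply, hv₁, if_pos hx1, if_pos hx2, sub_self]
  have : v = (v - v₁) + v₁ := by ring
  rw [this]
  exact Submodule.add_mem_sup h₂ h₁

lemma rk_mul_disjoint {σ τ : Equiv.Perm α} (h : Equiv.Perm.Disjoint σ τ) :
    rk (σ * τ) = rk σ + rk τ := by
  have h1 := rk_add_nullity (σ * τ)
  have h2 := rk_add_nullity σ
  have h3 := rk_add_nullity τ
  have h4 := Submodule.finrank_sup_add_finrank_inf_eq
    (LinearMap.ker (permL σ)) (LinearMap.ker (permL τ))
  rw [ker_permL_sup h] at h4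
  rw [ker_permL_mul h] at h1
  have h5 : Module.finrank ℚ (⊤ : Submodule ℚ (α → ℚ)) = Fintype.card α := by
    rw [finrank_top, Module.finrank_pi]
  omega

/-- The key formula: the rank of `1 - σ` equals `∑ (cᵢ - 1)` over the cycle type. -/
lemma rk_add_card_cycleType (σ : Equiv.Perm α) :
    rk σ + σ.cycleType.card = σ.cycleType.sum := by
  induction σ using Equiv.Perm.cycle_induction_on with
  | base_one => simp [rk_one]
  | base_cycles c hc =>
    have h1 := rk_isCycle hc
    rw [hc.cycleType]
    simpa using h1
  | induction_disjoint σ τ hd hσ ih1 ih2 =>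
    rw [rk_mul_disjoint hd, hd.cycleType_mul]
    simp only [Multiset.card_add, Multiset.sum_add]
    omega

lemma card_cycleType_mul_lt {a b : Equiv.Perm α} (hnd : ¬ a.Disjoint b)
    (heq : rk (a * b) = rk a + rk b) :
    (a * b).cycleType.card < a.cycleType.card + b.cycleType.card := by
  rw [Equiv.Perm.Disjoint] at hnd
  push_neg at hnd
  obtain ⟨x, hax, hbx⟩ := hnd
  have hxa : x ∈ a.support := Equiv.Perm.mem_support.mpr hax
  have hxb : x ∈ b.support := Equiv.Perm.mem_support.mpr hbx
  have hinter : 1 ≤ (a.support ∩ b.support).card :=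
    Finset.card_pos.mpr ⟨x, Finset.mem_inter.mpr ⟨hxa, hxb⟩⟩
  have hunion := Finset.card_union_add_card_inter a.support b.support
  have hsupp : (a * b).support.card ≤ (a.support ∪ b.support).card :=
    Finset.card_le_card (Equiv.Perm.support_mul_le a b)
  have e1 : rk (a*b) + (a*b).cycleType.card = (a*b).support.card := by
    rw [rk_add_card_cycleType, Equiv.Perm.sum_cycleType]
  have e2 : rk a + a.cycleType.card = a.support.card := by
    rw [rk_add_card_cycleType, Equiv.Perm.sum_cycleType]
  have e3 : rk b + b.cycleType.card = b.support.card := by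
    rw [rk_add_card_cycleType, Equiv.Perm.sum_cycleType]
  omega

lemma rk_eq_cases {a b : Equiv.Perm α} (h : rk (a * b) = rk a + rk b) :
    (a * b).cycleType = a.cycleType + b.cycleType ∨
      (a * b).cycleType.card < a.cycleType.card + b.cycleType.card := by
  by_cases hd : a.Disjoint b
  · exact Or.inl hd.cycleType_mul
  · exact Or.inr (card_cycleType_mul_lt hd h)

end RankLemmas

/-! ### Class sums in the group algebra -/

/-- `classSum n m` is the sum, in the group algebra `ℚ[Sₙ]`, of all permutations
whose cycle type is the multiset `m` (parts of size 1 being suppressed, as in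
Mathlib's `Equiv.Perm.cycleType`). -/
noncomputable def classSum (n : ℕ) (m : Multiset ℕ) : MonoidAlgebra ℚ (Equiv.Perm (Fin n)) :=
  ∑ σ ∈ Finset.univ.filter (fun σ : Equiv.Perm (Fin n) => σ.cycleType = m),
    MonoidAlgebra.single σ (1 : ℚ)

/-- The cycle sum `sᵢ`: the sum of all `i`-cycles in `Sₙ` for `i ≥ 2`, and the
identity of `ℚ[Sₙ]` for `i ≤ 1`. -/
noncomputable def cycleSum (n i : ℕ) : MonoidAlgebra ℚ (Equiv.Perm (Fin n)) :=
  if i < 2 then 1 else classSum n {i}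

section ClassSums

open Equiv Equiv.Perm

variable {n : ℕ}

lemma classSum_apply (m : Multiset ℕ) (σ : Equiv.Perm (Fin n)) :
    (classSum n m).coeff σ = if σ.cycleType = m then 1 else 0 := by
  classical
  rw [classSum, MonoidAlgebra.coeff_sum, Finsupp.finset_sum_apply]
  simp only [MonoidAlgebra.coeff_single, Finsupp.single_apply]
  rw [Finset.sum_ite_eq' (Finset.univ.filter (fun τ : Equiv.Perm (Fin n) => τ.cycleType = m)) σ
    (fun _ => (1:ℚ))]
  simp [Finset.mem_filter]

lemma classSum_mem_center (m : Multiset ℕ) :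
    classSum n m ∈ Subalgebra.center ℚ (MonoidAlgebra ℚ (Equiv.Perm (Fin n))) := by
  rw [Subalgebra.mem_center_iff]
  intro b
  induction b using MonoidAlgebra.induction_on with
  | of g =>
    show MonoidAlgebra.single g 1 * _ = _ * MonoidAlgebra.single g 1
    rw [classSum, Finset.sum_mul, Finset.mul_sum]
    simp only [MonoidAlgebra.single_mul_single, one_mul, mul_one]
    refine Finset.sum_bij (fun σ _ => g * σ * g⁻¹) ?_ ?_ ?_ ?_
    · intro σ hσ
      simp only [Finset.mem_filter, Finset.mem_univ, true_and] at hσ ⊢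
      rw [Equiv.Perm.cycleType_conj, hσ]
    · intro σ1 h1 σ2 h2 h
      simpa using mul_left_cancel (mul_right_cancel h)
    · intro τ hτ
      refine ⟨g⁻¹ * τ * g, ?_, by group⟩
      simp only [Finset.mem_filter, Finset.mem_univ, true_and] at hτ ⊢
      have := Equiv.Perm.cycleType_conj (σ := τ) (τ := g⁻¹)
      simpa using this.trans hτ
    · intro σ hσ
      congr 1
      group
  | add f g hf hg => rw [add_mul, mul_add, hf, hg]
  | smul r f hf => rw [smul_mul_assoc, mul_smul_comm, hf]

/-- a canonical representative permutation with a given cycle type -/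
noncomputable def typeRep (n : ℕ) (m : Multiset ℕ) : Equiv.Perm (Fin n) :=
  if h : ∃ σ : Equiv.Perm (Fin n), σ.cycleType = m then h.choose else 1

lemma typeRep_spec {m : Multiset ℕ} (h : ∃ σ : Equiv.Perm (Fin n), σ.cycleType = m) :
    (typeRep n m).cycleType = m := by
  rw [typeRep, dif_pos h]
  exact h.choose_spec

lemma central_apply_conj {x : MonoidAlgebra ℚ (Equiv.Perm (Fin n))}
    (hx : ∀ b, b * x = x * b) (g σ : Equiv.Perm (Fin n)) :
    x.coeff (g * σ * g⁻¹) = x.coeff σ := by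
  have h2 : ((MonoidAlgebra.single g 1 : MonoidAlgebra ℚ (Equiv.Perm (Fin n))) * x).coeff (g * σ)
      = (x * (MonoidAlgebra.single g 1 : MonoidAlgebra ℚ (Equiv.Perm (Fin n)))).coeff (g * σ) := by
    rw [hx ((MonoidAlgebra.single g 1 : MonoidAlgebra ℚ (Equiv.Perm (Fin n))))]
  rw [MonoidAlgebra.coeff_single_mul_apply, MonoidAlgebra.coeff_mul_single_apply] at h2
  simp only [one_mul, mul_one] at h2
  rw [← mul_assoc] at h2
  rw [← h2]
  congr 1
  group

lemma central_apply_eq_of_cycleType {x : MonoidAlgebra ℚ (Equiv.Perm (Fin n))}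
    (hx : ∀ b, b * x = x * b) {σ τ : Equiv.Perm (Fin n)}
    (h : σ.cycleType = τ.cycleType) : x.coeff σ = x.coeff τ := by
  obtain ⟨g, hg⟩ := isConj_iff.mp (Equiv.Perm.isConj_of_cycleType_eq h)
  rw [← hg]
  exact (central_apply_conj hx g σ).symm

lemma centerDecomp {x : MonoidAlgebra ℚ (Equiv.Perm (Fin n))}
    (hx : ∀ b, b * x = x * b) :
    x = ∑ m ∈ Finset.univ.image (fun σ : Equiv.Perm (Fin n) => σ.cycleType),
      x.coeff (typeRep n m) • classSum n m := by
  ext σ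
  rw [MonoidAlgebra.coeff_sum, Finsupp.finset_sum_apply]
  have hterm : ∀ m ∈ Finset.univ.image (fun σ : Equiv.Perm (Fin n) => σ.cycleType),
      (x.coeff (typeRep n m) • classSum n m).coeff σ
        = x.coeff (typeRep n m) * (if σ.cycleType = m then 1 else 0) := by
    intro m _
    rw [MonoidAlgebra.coeff_smul_apply, classSum_apply, smul_eq_mul]
  rw [Finset.sum_congr rfl hterm]
  rw [Finset.sum_eq_single σ.cycleType]
  · rw [if_pos rfl, mul_one]
    exact (central_apply_eq_of_cycleType hx (typeRep_spec ⟨σ, rfl⟩)).symm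
  · intro m _ hm
    rw [if_neg (fun h => hm h.symm), mul_zero]
  · intro h
    exact absurd (Finset.mem_image.mpr ⟨σ, Finset.mem_univ _, rfl⟩) h

lemma classSum_prod_apply (m₁ m₂ : Multiset ℕ) (σ : Equiv.Perm (Fin n)) :
    (classSum n m₁ * classSum n m₂).coeff σ =
      ∑ a ∈ Finset.univ.filter (fun a : Equiv.Perm (Fin n) => a.cycleType = m₁),
        ∑ b ∈ Finset.univ.filter (fun b : Equiv.Perm (Fin n) => b.cycleType = m₂),
          (if a * b = σ then (1 : ℚ) else 0) := by
  rw [classSum, classSum, Finset.sum_mul_sum]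
  simp only [MonoidAlgebra.single_mul_single, one_mul]
  rw [MonoidAlgebra.coeff_sum, Finsupp.finset_sum_apply]
  refine Finset.sum_congr rfl (fun a _ => ?_)
  rw [MonoidAlgebra.coeff_sum, Finsupp.finset_sum_apply]
  refine Finset.sum_congr rfl (fun b _ => ?_)
  classical
  rw [MonoidAlgebra.coeff_single, Finsupp.single_apply]

lemma prod_apply_ne_zero {m₁ m₂ : Multiset ℕ} {σ : Equiv.Perm (Fin n)}
    (h : (classSum n m₁ * classSum n m₂).coeff σ ≠ 0) :
    ∃ a b : Equiv.Perm (Fin n), a.cycleType = m₁ ∧ b.cycleType = m₂ ∧ a * b = σ := by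
  by_contra hc
  push_neg at hc
  apply h
  rw [classSum_prod_apply]
  refine Finset.sum_eq_zero (fun a ha => Finset.sum_eq_zero (fun b hb => ?_))
  rw [if_neg]
  exact fun hab => (hc a b (Finset.mem_filter.mp ha).2 (Finset.mem_filter.mp hb).2) hab

lemma prod_apply_pos {m₁ m₂ : Multiset ℕ} {a b : Equiv.Perm (Fin n)}
    (ha : a.cycleType = m₁) (hb : b.cycleType = m₂) :
    (classSum n m₁ * classSum n m₂).coeff (a * b) ≠ 0 := by
  have : (0:ℚ) < (classSum n m₁ * classSum n m₂).coeff (a * b) := by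
    rw [classSum_prod_apply]
    refine Finset.sum_pos' (fun i _ => Finset.sum_nonneg (fun j _ => by positivity)) ?_
    refine ⟨a, Finset.mem_filter.mpr ⟨Finset.mem_univ _, ha⟩, ?_⟩
    refine Finset.sum_pos' (fun j _ => by positivity) ?_
    exact ⟨b, Finset.mem_filter.mpr ⟨Finset.mem_univ _, hb⟩, by rw [if_pos rfl]; norm_num⟩
  exact ne_of_gt this

end ClassSums

/-! ### The generating set and the main induction -/

def Yset (n ℓ : ℕ) : Set (MonoidAlgebra ℚ (Equiv.Perm (Fin n))) :=
  {x : MonoidAlgebra ℚ (Equiv.Perm (Fin n)) |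
    (∃ i, 1 ≤ i ∧ i ≤ n ∧ (Even i → ¬ ℓ ∣ i) ∧ x = cycleSum n i) ∨
    (∃ j, 1 ≤ j ∧ 1 < 2 * ℓ * j ∧ 2 * ℓ * j < n ∧
      x = classSum n {2 * ℓ * j - 1, 2})}

section Main

open Equiv Equiv.Perm

variable {n ℓ : ℕ}

lemma classSum_singleton_mem (hℓ1 : 1 < ℓ) {i : ℕ} (h2 : 2 ≤ i) (hn : i ≤ n)
    (hi : Even i → ¬ ℓ ∣ i) :
    classSum n {i} ∈ Algebra.adjoin ℚ (Yset n ℓ) := by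
  apply Algebra.subset_adjoin
  left
  exact ⟨i, by omega, hn, hi, by rw [cycleSum, if_neg (by omega)]⟩

lemma W_lt {d' c' d c m : ℕ} (h : d' < d ∧ c' ≤ m + 1 ∨ d' = d ∧ c' < c) :
    d' * (m + 2) + c' < d * (m + 2) + c := by
  rcases h with ⟨h1, h2⟩ | ⟨h1, h2⟩
  · have h3 : (d' + 1) * (m + 2) ≤ d * (m + 2) := Nat.mul_le_mul_right _ (by omega)
    have h4 : (d' + 1) * (m + 2) = d' * (m + 2) + (m + 2) := by ring
    omega
  · subst h1
    omega

/-- the extraction step: if the product of two class sums has nonzero coefficient on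
class `m`, and all other classes appearing in the product are already in the adjoin,
then `classSum n m` is in the adjoin. -/
lemma extract_classSum (hℓ1 : 1 < ℓ) (m₁ m₂ m : Multiset ℕ)
    (h1 : classSum n m₁ ∈ Algebra.adjoin ℚ (Yset n ℓ))
    (h2 : classSum n m₂ ∈ Algebra.adjoin ℚ (Yset n ℓ))
    (hmT : m ∈ Finset.univ.image (fun σ : Equiv.Perm (Fin n) => σ.cycleType))
    (hc : (classSum n m₁ * classSum n m₂).coeff (typeRep n m) ≠ 0)
    (hrest : ∀ m' ∈ (Finset.univ.image (fun σ : Equiv.Perm (Fin n) => σ.cycleType)).erase m,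
      (classSum n m₁ * classSum n m₂).coeff (typeRep n m') ≠ 0 →
      classSum n m' ∈ Algebra.adjoin ℚ (Yset n ℓ)) :
    classSum n m ∈ Algebra.adjoin ℚ (Yset n ℓ) := by
  classical
  set P := classSum n m₁ * classSum n m₂ with hP
  have hPcen : P ∈ Subalgebra.center ℚ (MonoidAlgebra ℚ (Equiv.Perm (Fin n))) :=
    mul_mem (classSum_mem_center m₁) (classSum_mem_center m₂)
  have hPc : ∀ b, b * P = P * b := Subalgebra.mem_center_iff.mp hPcen
  have hdec := centerDecomp hPc
  rw [← Finset.add_sum_erase _ _ hmT] at hdec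
  have hsolve : P.coeff (typeRep n m) • classSum n m =
      P - ∑ m' ∈ (Finset.univ.image (fun σ : Equiv.Perm (Fin n) => σ.cycleType)).erase m,
        P.coeff (typeRep n m') • classSum n m' := eq_sub_of_add_eq hdec.symm
  have hPA : P ∈ Algebra.adjoin ℚ (Yset n ℓ) := mul_mem h1 h2
  have hrestA : (∑ m' ∈ (Finset.univ.image
        (fun σ : Equiv.Perm (Fin n) => σ.cycleType)).erase m,
      P.coeff (typeRep n m') • classSum n m') ∈ Algebra.adjoin ℚ (Yset n ℓ) := by
    refine sum_mem (fun m' hm' => ?_)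
    by_cases hz : P.coeff (typeRep n m') = 0
    · rw [hz, zero_smul]
      exact zero_mem _
    · exact Subalgebra.smul_mem _ (hrest m' hm' hz) _
  have hmem : P - (∑ m' ∈ (Finset.univ.image
        (fun σ : Equiv.Perm (Fin n) => σ.cycleType)).erase m,
      P.coeff (typeRep n m') • classSum n m') ∈ Algebra.adjoin ℚ (Yset n ℓ) :=
    sub_mem hPA hrestA
  rw [← hsolve] at hmem
  have hmem2 := Subalgebra.smul_mem _ hmem (P.coeff (typeRep n m))⁻¹
  rwa [inv_smul_smul₀ hc] at hmem2

lemma classSum_mem_adjoin (hℓ1 : 1 < ℓ) (hℓodd : Odd ℓ) :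
    ∀ (N : ℕ) (m : Multiset ℕ),
      (m.sum - Multiset.card m) * (n + 2) + Multiset.card m ≤ N →
      classSum n m ∈ Algebra.adjoin ℚ (Yset n ℓ) := by
  intro N
  induction N using Nat.strong_induction_on with
  | _ N IH =>
  intro m hWm
  classical
  by_cases hex : ∃ σ : Equiv.Perm (Fin n), σ.cycleType = m
  swap
  · have hz : classSum n m = 0 := by
      rw [classSum]
      have he : Finset.univ.filter (fun σ : Equiv.Perm (Fin n) => σ.cycleType = m) = ∅ := by
        rw [Finset.filter_eq_empty_iff]
        intro σ _
        exact fun h => hex ⟨σ, h⟩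
      rw [he, Finset.sum_empty]
    rw [hz]
    exact zero_mem _
  obtain ⟨π₀, hπ₀⟩ := hex
  have hparts : ∀ a ∈ m, 2 ≤ a := fun a ha => two_le_of_mem_cycleType (by rwa [hπ₀])
  have hsum_le : m.sum ≤ n := by
    rw [← hπ₀, Equiv.Perm.sum_cycleType]
    have := π₀.support.card_le_univ
    simpa using this
  have hcard2 : 2 * Multiset.card m ≤ m.sum := by
    have := Multiset.card_nsmul_le_sum hparts
    simpa [mul_comm] using this
  have hmem_rk : ∀ (σ : Equiv.Perm (Fin n)), rk σ + Multiset.card σ.cycleType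
      = σ.cycleType.sum := fun σ => rk_add_card_cycleType σ
  -- the map from coefficients to factorizations
  have hmT : m ∈ Finset.univ.image (fun σ : Equiv.Perm (Fin n) => σ.cycleType) :=
    Finset.mem_image.mpr ⟨π₀, Finset.mem_univ _, hπ₀⟩
  rcases Nat.lt_or_ge (Multiset.card m) 2 with hc2 | hc2
  · rcases Nat.lt_or_ge (Multiset.card m) 1 with hc1 | hc1
    · -- m = 0 : classSum is the identity
      have hm0 : m = 0 := Multiset.card_eq_zero.mp (by omega)
      subst hm0
      have : classSum n (0 : Multiset ℕ) = 1 := by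
        rw [classSum]
        have he : Finset.univ.filter
            (fun σ : Equiv.Perm (Fin n) => σ.cycleType = (0 : Multiset ℕ)) = {1} := by
          ext σ
          simp [Equiv.Perm.cycleType_eq_zero]
        rw [he, Finset.sum_singleton, MonoidAlgebra.one_def]
      rw [this]
      exact one_mem _
    · -- m = {k} : a single cycle sum
      have hcc1 : Multiset.card m = 1 := by omega
      obtain ⟨k, hk⟩ := Multiset.card_eq_one.mp hcc1
      subst hk
      have hk2 : 2 ≤ k := hparts k (Multiset.mem_singleton_self k)
      have hkn : k ≤ n := by simpa using hsum_le
      by_cases hgen : Even k → ¬ ℓ ∣ k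
      · exact classSum_singleton_mem hℓ1 hk2 hkn hgen
      · -- k = 2ℓj : the hard case
        push_neg at hgen
        obtain ⟨hkeven, hkdvd⟩ := hgen
        have hl3 : 3 ≤ ℓ := by
          rcases hℓodd with ⟨t, ht⟩
          omega
        have h2lk : 2 * ℓ ∣ k := by
          refine Nat.Coprime.mul_dvd_of_dvd_of_dvd ?_ hkeven.two_dvd hkdvd
          exact Nat.coprime_two_left.mpr hℓodd
        obtain ⟨j, hj⟩ := h2lk
        have hj1 : 1 ≤ j := by
          rcases Nat.eq_zero_or_pos j with h | h
          · subst h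
            simp at hj
            omega
          · exact h
        have hk6 : 6 ≤ k := by
          have : 2 * ℓ * 1 ≤ 2 * ℓ * j := Nat.mul_le_mul_left _ hj1
          omega
        -- the k-cycle π and its factorization as (2-cycle) * (k-1 cycle)
        set π := typeRep n {k} with hπdef
        have hπtype : π.cycleType = {k} := typeRep_spec ⟨π₀, hπ₀⟩
        have hπcyc : π.IsCycle := by
          rw [← Equiv.Perm.card_cycleType_eq_one, hπtype]
          rfl
        have hπsupp : π.support.card = k := by
          have := Equiv.Perm.sum_cycleType π
          rw [hπtype] at this
          simpa using this.symm
        obtain ⟨x, hx⟩ : ∃ x, x ∈ π.support := by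
          have : 0 < π.support.card := by omega
          exact (Finset.card_pos.mp this).exists_mem
        have hx' : π x ≠ x := Equiv.Perm.mem_support.mp hx
        have hffx : π (π x) ≠ x := by
          intro h
          have heq := hπcyc.eq_swap_of_apply_apply_eq_self hx' h
          have : π.support.card = 2 := by
            rw [heq]
            exact Equiv.Perm.card_support_swap (fun hxx => hx' hxx.symm)
          omega
        set a := Equiv.swap x (π x) with hadef
        set b := Equiv.swap x (π x) * π with hbdef
        have ha_type : a.cycleType = {2} := by
          have hcyc : a.IsCycle := Equiv.Perm.isCycle_swap (fun hxx => hx' hxx.symm)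
          rw [hcyc.cycleType]
          have : a.support.card = 2 :=
            Equiv.Perm.card_support_swap (fun hxx => hx' hxx.symm)
          rw [this]
        have hb_cyc : b.IsCycle := hπcyc.swap_mul hx' hffx
        have hb_supp : b.support = π.support \ {x} :=
          Equiv.Perm.support_swap_mul_eq π x hffx
        have hb_card : b.support.card = k - 1 := by
          rw [hb_supp, Finset.card_sdiff_of_subset (Finset.singleton_subset_iff.mpr hx)]
          simp [hπsupp]
        have hb_type : b.cycleType = {k - 1} := by
          rw [hb_cyc.cycleType, hb_card]
        have hab : a * b = π := Equiv.swap_mul_self_mul x (π x) π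
        -- factors are generators
        have hA2 : classSum n {2} ∈ Algebra.adjoin ℚ (Yset n ℓ) := by
          refine classSum_singleton_mem hℓ1 le_rfl (by omega) ?_
          intro _ hdvd
          have := Nat.le_of_dvd (by norm_num) hdvd
          omega
        have hAk1 : classSum n {k - 1} ∈ Algebra.adjoin ℚ (Yset n ℓ) := by
          refine classSum_singleton_mem hℓ1 (by omega) (by omega) ?_
          intro hev _
          rcases hkeven with ⟨s, hs⟩
          rcases hev with ⟨t, ht⟩
          omega
        -- extraction
        refine extract_classSum hℓ1 {2} {k - 1} {k} hA2 hAk1 hmT ?_ ?_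
        · have := prod_apply_pos (n := n) ha_type hb_type
          rwa [hab] at this
        · intro m' hm' hcm'
          have hm'T := Finset.mem_erase.mp hm'
          obtain ⟨τ, _, hτ⟩ := Finset.mem_image.mp hm'T.2
          obtain ⟨a', b', ha', hb', hab'⟩ := prod_apply_ne_zero hcm'
          have hσ'type : (a' * b').cycleType = m' := by
            rw [hab']
            exact typeRep_spec ⟨τ, hτ⟩
          -- rank bookkeeping
          have hra : rk a' + 1 = 2 := by
            have := hmem_rk a'
            rw [ha'] at this
            simpa using this
          have hrb : rk b' + 1 = k - 1 := by
            have := hmem_rk b'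
            rw [hb'] at this
            simpa using this
          have hrab : rk (a' * b') + Multiset.card m' = m'.sum := by
            have := hmem_rk (a' * b')
            rwa [hσ'type] at this
          have hrle := rk_mul_le a' b'
          -- m' facts
          have hm'parts : ∀ c ∈ m', 2 ≤ c := fun c hc =>
            two_le_of_mem_cycleType (by rwa [hσ'type])
          have hm'sum : m'.sum ≤ n := by
            rw [← hσ'type, Equiv.Perm.sum_cycleType]
            have := (a' * b').support.card_le_univ
            simpa using this
          have hm'card : 2 * Multiset.card m' ≤ m'.sum := by
            have := Multiset.card_nsmul_le_sum hm'parts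
            simpa [mul_comm] using this
          rcases Nat.lt_or_ge (rk (a' * b')) (rk a' + rk b') with hlt | hge
          · -- strictly smaller degree: induction
            refine IH ((m'.sum - Multiset.card m') * (n + 2) + Multiset.card m')
              (lt_of_lt_of_le ?_ hWm) m' le_rfl
            refine W_lt (Or.inl ⟨?_, ?_⟩)
            · simp only [Multiset.card_singleton, Multiset.sum_singleton]
              omega
            · omega
          · have hreq : rk (a' * b') = rk a' + rk b' := le_antisymm hrle hge
            rcases rk_eq_cases hreq with hcase | hcase
            · -- m' = {2} + {k-1} : the special generator
              rw [hσ'type, ha', hb'] at hcase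
              have hm'eq : m' = {k - 1, 2} := by
                rw [hcase]
                rw [Multiset.singleton_add]
                exact Multiset.cons_swap 2 (k-1) 0
              have hkn' : k < n := by
                have : m'.sum = (k - 1) + 2 := by
                  rw [hm'eq]
                  simp [Multiset.sum_cons]
                omega
              rw [hm'eq]
              apply Algebra.subset_adjoin
              right
              refine ⟨j, hj1, by omega, by omega, ?_⟩
              rw [hj]
            · -- fewer cycles, same degree : but card m₁ + card m₂ = 2
              rw [hσ'type, ha', hb'] at hcase
              simp only [Multiset.card_singleton] at hcase
              -- card m' ≤ 1
              rcases Nat.lt_or_ge (Multiset.card m') 1 with hcc | hcc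
              · have : m' = 0 := Multiset.card_eq_zero.mp (by omega)
                rw [this] at hrab
                simp at hrab
                omega
              · have hcc1 : Multiset.card m' = 1 := by omega
                obtain ⟨t, ht⟩ := Multiset.card_eq_one.mp hcc1
                exfalso
                apply hm'T.1
                rw [ht]
                have : t = k := by
                  rw [ht] at hrab
                  simp only [Multiset.card_singleton, Multiset.sum_singleton] at hrab
                  omega
                rw [this]
  · -- card m ≥ 2 : split off one cycle
    have hm0 : m ≠ 0 := by
      intro h
      rw [h] at hc2
      simp at hc2
    obtain ⟨k, hkm⟩ := Multiset.exists_mem_of_ne_zero hm0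
    set ν := m.erase k with hνdef
    have hmcons : k ::ₘ ν = m := Multiset.cons_erase hkm
    have hk2 : 2 ≤ k := hparts k hkm
    have hνcard : Multiset.card ν + 1 = Multiset.card m := by
      rw [← hmcons]
      simp
    have hνsum : ν.sum + k = m.sum := by
      rw [← hmcons]
      simp [Multiset.sum_cons]
      omega
    have hνparts : ∀ c ∈ ν, 2 ≤ c := fun c hc =>
      hparts c (Multiset.mem_of_mem_erase hc)
    have hνcard2 : 2 * Multiset.card ν ≤ ν.sum := by
      have := Multiset.card_nsmul_le_sum hνparts
      simpa [mul_comm] using this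
    -- decompose the representative
    set π := typeRep n m with hπdef
    have hπtype : π.cycleType = m := typeRep_spec ⟨π₀, hπ₀⟩
    have hkπ : k ∈ π.cycleType := by rw [hπtype]; exact hkm
    obtain ⟨c, τ, hcτ, hdisj, hccyc, hcsupp⟩ := Equiv.Perm.mem_cycleType_iff.mp hkπ
    have hc_type : c.cycleType = {k} := by
      rw [hccyc.cycleType, hcsupp]
    have hτ_type : τ.cycleType = ν := by
      have h1 : m = {k} + τ.cycleType := by
        rw [← hπtype, hcτ, hdisj.cycleType_mul, hc_type]
      rw [Multiset.singleton_add] at h1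
      rw [hνdef, h1, Multiset.erase_cons_head]
    -- both factors are in the adjoin, by induction
    have hAk : classSum n {k} ∈ Algebra.adjoin ℚ (Yset n ℓ) := by
      refine IH ((({k} : Multiset ℕ).sum - Multiset.card ({k} : Multiset ℕ)) * (n + 2)
        + Multiset.card ({k} : Multiset ℕ)) (lt_of_lt_of_le ?_ hWm) {k} le_rfl
      simp only [Multiset.sum_singleton, Multiset.card_singleton]
      refine W_lt (Or.inl ⟨?_, ?_⟩) <;> omega
    have hAν : classSum n ν ∈ Algebra.adjoin ℚ (Yset n ℓ) := by
      refine IH ((ν.sum - Multiset.card ν) * (n + 2) + Multiset.card ν)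
        (lt_of_lt_of_le ?_ hWm) ν le_rfl
      refine W_lt (Or.inl ⟨?_, ?_⟩) <;> omega
    refine extract_classSum hℓ1 {k} ν m hAk hAν hmT ?_ ?_
    · have := prod_apply_pos (n := n) hc_type hτ_type
      rwa [← hcτ] at this
    · intro m' hm' hcm'
      have hm'T := Finset.mem_erase.mp hm'
      obtain ⟨ρ, _, hρ⟩ := Finset.mem_image.mp hm'T.2
      obtain ⟨a', b', ha', hb', hab'⟩ := prod_apply_ne_zero hcm'
      have hσ'type : (a' * b').cycleType = m' := by
        rw [hab']
        exact typeRep_spec ⟨ρ, hρ⟩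
      have hra : rk a' + 1 = k := by
        have := hmem_rk a'
        rw [ha'] at this
        simpa using this
      have hrb : rk b' + Multiset.card ν = ν.sum := by
        have := hmem_rk b'
        rwa [hb'] at this
      have hrab : rk (a' * b') + Multiset.card m' = m'.sum := by
        have := hmem_rk (a' * b')
        rwa [hσ'type] at this
      have hrle := rk_mul_le a' b'
      have hm'parts : ∀ d ∈ m', 2 ≤ d := fun d hd =>
        two_le_of_mem_cycleType (by rwa [hσ'type])
      have hm'sum : m'.sum ≤ n := by
        rw [← hσ'type, Equiv.Perm.sum_cycleType]
        have := (a' * b').support.card_le_univ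
        simpa using this
      have hm'card : 2 * Multiset.card m' ≤ m'.sum := by
        have := Multiset.card_nsmul_le_sum hm'parts
        simpa [mul_comm] using this
      rcases Nat.lt_or_ge (rk (a' * b')) (rk a' + rk b') with hlt | hge
      · refine IH ((m'.sum - Multiset.card m') * (n + 2) + Multiset.card m')
          (lt_of_lt_of_le ?_ hWm) m' le_rfl
        refine W_lt (Or.inl ⟨?_, ?_⟩) <;> omega
      · have hreq : rk (a' * b') = rk a' + rk b' := le_antisymm hrle hge
        rcases rk_eq_cases hreq with hcase | hcase
        · -- m' = {k} + ν = m : contradiction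
          exfalso
          apply hm'T.1
          rw [hσ'type, ha', hb'] at hcase
          rw [hcase, Multiset.singleton_add, hmcons]
        · -- same degree, fewer cycles: induction
          rw [hσ'type, ha', hb'] at hcase
          simp only [Multiset.card_singleton] at hcase
          refine IH ((m'.sum - Multiset.card m') * (n + 2) + Multiset.card m')
            (lt_of_lt_of_le ?_ hWm) m' le_rfl
          refine W_lt (Or.inr ⟨?_, ?_⟩) <;> omega

end Main

/-- For odd `ℓ > 1`, the class sums
`Y_ℓ(n) = {sᵢ : 1 ≤ i ≤ n, and if i is even then ℓ ∤ i} ∪ {s_{(2ℓj−1,2)} : 1 < 2ℓj < n}`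
generate the center of `ℚ[Sₙ]` as a ℚ-algebra. -/
theorem adjoin_Y_eq_center (n ℓ : ℕ) (hℓ1 : 1 < ℓ) (hℓodd : Odd ℓ) :
    Algebra.adjoin ℚ {x : MonoidAlgebra ℚ (Equiv.Perm (Fin n)) |
        (∃ i, 1 ≤ i ∧ i ≤ n ∧ (Even i → ¬ ℓ ∣ i) ∧ x = cycleSum n i) ∨
        (∃ j, 1 ≤ j ∧ 1 < 2 * ℓ * j ∧ 2 * ℓ * j < n ∧
          x = classSum n {2 * ℓ * j - 1, 2})} =
      Subalgebra.center ℚ (MonoidAlgebra ℚ (Equiv.Perm (Fin n))) := by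
  show Algebra.adjoin ℚ (Yset n ℓ) = _
  apply le_antisymm
  · rw [Algebra.adjoin_le_iff]
    rintro x (⟨i, hi1, hin, hie, rfl⟩ | ⟨j, hj1, hj2, hj3, rfl⟩)
    · rw [cycleSum]
      split_ifs
      · exact one_mem _
      · exact classSum_mem_center _
    · exact classSum_mem_center _
  · intro x hx
    have hx' : ∀ b, b * x = x * b := Subalgebra.mem_center_iff.mp hx
    rw [centerDecomp hx']
    refine sum_mem (fun m' _ => Subalgebra.smul_mem _ ?_ _)
    exact classSum_mem_adjoin hℓ1 hℓodd _ m' le_rfl
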